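/- Let f₀ be a continuous log-concave probability density on ℝ with quantile function F₀⁻¹ and density quantile function J₀ := f₀ ∘ F₀⁻¹. For j ∈ ℤ define u_j := 2^{j−1} if j ≤ 0 and u_j := 1 − 2^{−(j+1)} if j ≥ 1, and a_j := F₀⁻¹(u_j). Then for each j ∈ ℤ, sup over x', x'' ∈ [a_j, a_{j+1}] of f₀(x')/f₀(x'') is at most 2. -/

import Mathlib

open MeasureTheory Real

/-- The dyadic grid of quantile levels: `u_j = 2^{j−1}` for `j ≤ 0` and
`u_j = 1 − 2^{−(j+1)}` for `j ≥ 1`. -/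
noncomputable def uGrid (j : ℤ) : ℝ := if j ≤ 0 then (2:ℝ) ^ (j - 1) else 1 - (2:ℝ) ^ (-(j + 1))

section Auxiliary

/-- Integral of a function dominated by an exponential on `Iic a`. -/
lemma iic_le_exp_bound (f : ℝ → ℝ) (hf : Integrable f) {c K a : ℝ} (hc : 0 < c) (hK : 0 ≤ K)
    (hbd : ∀ t ≤ a, f t ≤ K * Real.exp (c * (t - a))) :
    ∫ t in Set.Iic a, f t ≤ K / c := by
  have hg : ∀ t : ℝ, HasDerivAt (fun s => K / c * Real.exp (c * (s - a)))
      (K * Real.exp (c * (t - a))) t := by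
    intro t
    have h := ((((hasDerivAt_id t).sub_const a).const_mul c).exp).const_mul (K / c)
    refine h.congr_deriv ?_
    rw [id_eq]
    field_simp
  have key : ∀ y ≤ a, (∫ t in y..a, f t) ≤ K / c := by
    intro y hy
    have hgi : IntervalIntegrable (fun t => K * Real.exp (c * (t - a))) volume y a :=
      (Continuous.intervalIntegrable (by continuity) y a)
    have h1 : (∫ t in y..a, f t) ≤ ∫ t in y..a, K * Real.exp (c * (t - a)) := by
      apply intervalIntegral.integral_mono_on hy hf.intervalIntegrable hgi
      intro t ht
      exact hbd t ht.2
    have h2 : (∫ t in y..a, K * Real.exp (c * (t - a)))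
        = K / c * Real.exp (c * (a - a)) - K / c * Real.exp (c * (y - a)) :=
      intervalIntegral.integral_eq_sub_of_hasDerivAt (fun t _ => hg t) hgi
    have h3 : K / c * Real.exp (c * (y - a)) ≥ 0 := by positivity
    have h4 : Real.exp (c * (a - a)) = 1 := by simp
    rw [h2, h4] at h1
    have : K / c ≥ 0 := by positivity
    linarith
  have tend := intervalIntegral_tendsto_integral_Iic a hf.integrableOn
    Filter.tendsto_id
  exact le_of_tendsto tend ((Filter.eventually_le_atBot a).mono fun y hy => key y hy)

set_option maxHeartbeats 1000000 in
/-- Key lemma: for a nonnegative integrable log-concave function,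
`f x * F a ≤ f a * F x` whenever `a ≤ x`, where `F` is the CDF-type integral. -/
lemma lemA (f : ℝ → ℝ) (hnn : ∀ x, 0 ≤ f x) (hf : Integrable f)
    (hlc : ∀ x y : ℝ, ∀ t ∈ Set.Icc (0:ℝ) 1,
      f x ^ t * f y ^ (1 - t) ≤ f (t * x + (1 - t) * y))
    {a x : ℝ} (hax : a ≤ x) (ha : 0 < f a) (hx : 0 < f x) :
    f x * ∫ t in Set.Iic a, f t ≤ f a * ∫ t in Set.Iic x, f t := by
  have hFa_nonneg : 0 ≤ ∫ t in Set.Iic a, f t :=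
    setIntegral_nonneg measurableSet_Iic fun t _ => hnn t
  have hFmono : (∫ t in Set.Iic a, f t) ≤ ∫ t in Set.Iic x, f t := by
    apply setIntegral_mono_set hf.integrableOn
      (Filter.Eventually.of_forall fun t => hnn t)
    exact Filter.Eventually.of_forall (Set.Iic_subset_Iic.2 hax)
  rcases eq_or_lt_of_le hax with rfl | hax'
  · exact le_of_eq (by ring)
  by_cases hfx : f x ≤ f a
  · nlinarith
  push_neg at hfx
  set c : ℝ := (Real.log (f x) - Real.log (f a)) / (x - a) with hc_def
  have hxa : (0:ℝ) < x - a := by linarith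
  have hc : 0 < c := div_pos (sub_pos.2 (Real.log_lt_log ha hfx)) hxa
  -- pointwise upper bound on Iic a
  have claim1 : ∀ t ≤ a, f t ≤ f a * Real.exp (c * (t - a)) := by
    intro t ht
    rcases eq_or_lt_of_le ht with rfl | ht'
    · simp
    by_contra hcon
    push_neg at hcon
    have hRpos : 0 < f a * Real.exp (c * (t - a)) := by positivity
    set lam : ℝ := (x - a) / (x - t) with hlam_def
    have hxt : (0:ℝ) < x - t := by linarith
    have hlam0 : 0 < lam := div_pos hxa hxt
    have hlam1 : lam ≤ 1 := (div_le_one hxt).2 (by linarith)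
    have hcombo : lam * t + (1 - lam) * x = a := by
      rw [hlam_def]
      field_simp
      ring
    have hlc' := hlc t x lam ⟨le_of_lt hlam0, hlam1⟩
    rw [hcombo] at hlc'
    have hstrict : (f a * Real.exp (c * (t - a))) ^ lam < f t ^ lam :=
      Real.rpow_lt_rpow (le_of_lt hRpos) hcon hlam0
    have hfx1 : 0 < f x ^ (1 - lam) := Real.rpow_pos_of_pos hx _
    have hkey : (f a * Real.exp (c * (t - a))) ^ lam * f x ^ (1 - lam) = f a := by
      rw [Real.rpow_def_of_pos hRpos, Real.rpow_def_of_pos hx, ← Real.exp_add,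
        Real.log_mul (ne_of_gt ha) (Real.exp_ne_zero _), Real.log_exp]
      have hexpo : (Real.log (f a) + c * (t - a)) * lam + Real.log (f x) * (1 - lam)
          = Real.log (f a) := by
        rw [hc_def, hlam_def]
        field_simp
        ring
      rw [hexpo, Real.exp_log ha]
    have hlt : f a < f t ^ lam * f x ^ (1 - lam) := by
      calc f a = (f a * Real.exp (c * (t - a))) ^ lam * f x ^ (1 - lam) := hkey.symm
      _ < f t ^ lam * f x ^ (1 - lam) := mul_lt_mul_of_pos_right hstrict hfx1
    linarith
  -- pointwise lower bound on [a, x]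
  have claim2 : ∀ t ∈ Set.Icc a x, f a * Real.exp (c * (t - a)) ≤ f t := by
    intro t ht
    set mu : ℝ := (x - t) / (x - a) with hmu_def
    have hmu0 : 0 ≤ mu := div_nonneg (by linarith [ht.2]) (le_of_lt hxa)
    have hmu1 : mu ≤ 1 := (div_le_one hxa).2 (by linarith [ht.1])
    have hcombo : mu * a + (1 - mu) * x = t := by
      rw [hmu_def]
      field_simp
      ring
    have hlc' := hlc a x mu ⟨hmu0, hmu1⟩
    rw [hcombo] at hlc'
    refine le_trans (le_of_eq ?_) hlc'
    rw [Real.rpow_def_of_pos ha, Real.rpow_def_of_pos hx, ← Real.exp_add,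
      show f a * Real.exp (c * (t - a)) = Real.exp (Real.log (f a) + c * (t - a)) by
        rw [Real.exp_add, Real.exp_log ha]]
    congr 1
    rw [hc_def, hmu_def]
    field_simp
    ring
  -- integrate the bounds
  have hFa_le : (∫ t in Set.Iic a, f t) ≤ f a / c :=
    iic_le_exp_bound f hf hc (le_of_lt ha) claim1
  have hIoc : (f x - f a) / c ≤ ∫ t in Set.Ioc a x, f t := by
    have hgi : IntegrableOn (fun t => f a * Real.exp (c * (t - a))) (Set.Ioc a x) volume :=
      (Continuous.integrableOn_Ioc (by continuity))
    have h1 : (∫ t in Set.Ioc a x, f a * Real.exp (c * (t - a))) ≤ ∫ t in Set.Ioc a x, f t := by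
      apply setIntegral_mono_on hgi hf.integrableOn measurableSet_Ioc
      intro t ht
      exact claim2 t ⟨le_of_lt ht.1, ht.2⟩
    refine le_trans (le_of_eq ?_) h1
    rw [← intervalIntegral.integral_of_le hax]
    have hg : ∀ t : ℝ, HasDerivAt (fun s => f a / c * Real.exp (c * (s - a)))
        (f a * Real.exp (c * (t - a))) t := by
      intro t
      have h := ((((hasDerivAt_id t).sub_const a).const_mul c).exp).const_mul (f a / c)
      refine h.congr_deriv ?_
      rw [id_eq]
      field_simp
    rw [intervalIntegral.integral_eq_sub_of_hasDerivAt (fun t _ => hg t)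
      (Continuous.intervalIntegrable (by continuity) a x)]
    have hexp : Real.exp (c * (x - a)) = f x / f a := by
      rw [hc_def, div_mul_cancel₀ _ (ne_of_gt hxa), Real.exp_sub, Real.exp_log hx,
        Real.exp_log ha]
    rw [hexp]
    field_simp
    simp
  have hsplit : (∫ t in Set.Iic x, f t) - ∫ t in Set.Iic a, f t = ∫ t in Set.Ioc a x, f t := by
    rw [← intervalIntegral.integral_of_le hax]
    exact intervalIntegral.integral_Iic_sub_Iic hf.integrableOn hf.integrableOn
  have e1 : (f x - f a) * (∫ t in Set.Iic a, f t) ≤ (f x - f a) * (f a / c) :=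
    mul_le_mul_of_nonneg_left hFa_le (by linarith)
  have e2 : f a * ((f x - f a) / c) ≤ f a * ∫ t in Set.Ioc a x, f t :=
    mul_le_mul_of_nonneg_left hIoc (le_of_lt ha)
  have e3 : f a * (∫ t in Set.Iic x, f t) - f a * (∫ t in Set.Iic a, f t)
      = f a * ∫ t in Set.Ioc a x, f t := by rw [← mul_sub, hsplit]
  have e4 : (f x - f a) * (f a / c) = f a * ((f x - f a) / c) := by ring
  nlinarith [e1, e2, e3, e4]

/-- Mirror of `lemA` for upper tails. -/
lemma lemB (f : ℝ → ℝ) (hnn : ∀ x, 0 ≤ f x) (hf : Integrable f)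
    (hlc : ∀ x y : ℝ, ∀ t ∈ Set.Icc (0:ℝ) 1,
      f x ^ t * f y ^ (1 - t) ≤ f (t * x + (1 - t) * y))
    {x b : ℝ} (hxb : x ≤ b) (hb : 0 < f b) (hx : 0 < f x) :
    f x * ∫ t in Set.Ioi b, f t ≤ f b * ∫ t in Set.Ioi x, f t := by
  have A : MeasurableEmbedding (fun x : ℝ => -x) :=
    (Homeomorph.neg ℝ).measurableEmbedding
  have hg : Integrable (fun t => f (-t)) volume := by
    have h := hf
    rw [← Measure.map_neg_eq_self (volume : Measure ℝ)] at h
    exact A.integrable_map_iff.mp h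
  have hglc : ∀ u v : ℝ, ∀ t ∈ Set.Icc (0:ℝ) 1,
      (fun s => f (-s)) u ^ t * (fun s => f (-s)) v ^ (1 - t)
        ≤ (fun s => f (-s)) (t * u + (1 - t) * v) := by
    intro u v t ht
    have h := hlc (-u) (-v) t ht
    rw [show t * (-u) + (1 - t) * (-v) = -(t * u + (1 - t) * v) by ring] at h
    exact h
  have key := lemA (fun t => f (-t)) (fun t => hnn (-t)) hg hglc
    (neg_le_neg hxb) (by simpa using hb) (by simpa using hx)
  rw [integral_comp_neg_Iic, integral_comp_neg_Iic] at key
  simpa using key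

lemma two_zpow_succ (k : ℤ) : (2:ℝ) ^ (k + 1) = 2 * (2:ℝ) ^ k := by
  rw [zpow_add₀ (by norm_num : (2:ℝ) ≠ 0), zpow_one]; ring

lemma two_zpow_le_half {k : ℤ} (hk : k ≤ -1) : (2:ℝ) ^ k ≤ 1 / 2 := by
  calc (2:ℝ) ^ k ≤ (2:ℝ) ^ (-1 : ℤ) := zpow_le_zpow_right₀ one_le_two hk
  _ = 1 / 2 := by norm_num

lemma two_zpow_le_quarter {k : ℤ} (hk : k ≤ -2) : (2:ℝ) ^ k ≤ 1 / 4 := by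
  calc (2:ℝ) ^ k ≤ (2:ℝ) ^ (-2 : ℤ) := zpow_le_zpow_right₀ one_le_two hk
  _ = 1 / 4 := by norm_num

lemma uGrid_pos (j : ℤ) : 0 < uGrid j := by
  unfold uGrid; split_ifs with h
  · positivity
  · have h1 : (2:ℝ) ^ (-(j + 1)) ≤ 1 / 2 := two_zpow_le_half (by omega)
    linarith

lemma uGrid_lt_one (j : ℤ) : uGrid j < 1 := by
  unfold uGrid; split_ifs with h
  · have h1 : (2:ℝ) ^ (j - 1) ≤ 1 / 2 := two_zpow_le_half (by omega)
    linarith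
  · have h3 : (0:ℝ) < (2:ℝ) ^ (-(j + 1)) := by positivity
    linarith

lemma uGrid_ratio1 (j : ℤ) : uGrid (j + 1) ≤ 2 * uGrid j := by
  unfold uGrid
  rcases lt_trichotomy j 0 with hj | rfl | hj
  · rw [if_pos (by omega : j + 1 ≤ 0), if_pos (by omega : j ≤ 0)]
    have e : (2:ℝ) ^ (j + 1 - 1) = 2 * (2:ℝ) ^ (j - 1) := by
      rw [show j + 1 - 1 = (j - 1) + 1 by ring, two_zpow_succ]
    linarith
  · norm_num
  · rw [if_neg (by omega : ¬(j + 1 ≤ 0)), if_neg (by omega : ¬(j ≤ 0))]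
    have e : (2:ℝ) ^ (-(j + 1)) = 2 * (2:ℝ) ^ (-(j + 1 + 1)) := by
      rw [show -(j + 1) = -(j + 1 + 1) + 1 by ring, two_zpow_succ]
    have h1 : (2:ℝ) ^ (-(j + 1)) ≤ 1 / 2 := two_zpow_le_half (by omega)
    have h3 : (0:ℝ) < (2:ℝ) ^ (-(j + 1 + 1)) := by positivity
    linarith

lemma uGrid_ratio2 (j : ℤ) : 1 - uGrid j ≤ 2 * (1 - uGrid (j + 1)) := by
  unfold uGrid
  rcases lt_trichotomy j 0 with hj | rfl | hj
  · rw [if_pos (by omega : j + 1 ≤ 0), if_pos (by omega : j ≤ 0)]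
    have e : (2:ℝ) ^ (j + 1 - 1) = 2 * (2:ℝ) ^ (j - 1) := by
      rw [show j + 1 - 1 = (j - 1) + 1 by ring, two_zpow_succ]
    have h1 : (2:ℝ) ^ (j - 1) ≤ 1 / 4 := two_zpow_le_quarter (by omega)
    linarith
  · norm_num
  · rw [if_neg (by omega : ¬(j + 1 ≤ 0)), if_neg (by omega : ¬(j ≤ 0))]
    have e : (2:ℝ) ^ (-(j + 1)) = 2 * (2:ℝ) ^ (-(j + 1 + 1)) := by
      rw [show -(j + 1) = -(j + 1 + 1) + 1 by ring, two_zpow_succ]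
    linarith

end Auxiliary

set_option maxHeartbeats 1000000 in
/-- On each cell `[a_j, a_{j+1}]` of the dyadic quantile grid `a_j = F₀⁻¹(u_j)`, a
continuous log-concave density varies by at most a multiplicative factor of `2`. -/
theorem density_ratio_on_dyadic_cell
    (f₀ : ℝ → ℝ) (hcont : Continuous f₀)
    (hf_nonneg : ∀ x, 0 ≤ f₀ x) (hf_int : Integrable f₀ volume) (hf_mass : ∫ x, f₀ x = 1)
    (hlogconc : ∀ x y : ℝ, ∀ t ∈ Set.Icc (0:ℝ) 1,
      f₀ x ^ t * f₀ y ^ (1 - t) ≤ f₀ (t * x + (1 - t) * y))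
    (Finv : ℝ → ℝ) (hFinv : ∀ u ∈ Set.Ioo (0:ℝ) 1, (∫ t in Set.Iic (Finv u), f₀ t) = u)
    (ψ₀ : ℝ → ℝ)
    (hψ : ∀ x : ℝ, 0 < f₀ x →
      HasDerivWithinAt (fun t => Real.log (f₀ t)) (ψ₀ x) (Set.Ici x) x)
    : ∀ j : ℤ, ∀ x' ∈ Set.Icc (Finv (uGrid j)) (Finv (uGrid (j + 1))),
      ∀ x'' ∈ Set.Icc (Finv (uGrid j)) (Finv (uGrid (j + 1))),
      f₀ x' ≤ 2 * f₀ x'' := by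
  intro j x' hx' x'' hx''
  set a := Finv (uGrid j) with ha_def
  set b := Finv (uGrid (j + 1)) with hb_def
  have hFa : (∫ t in Set.Iic a, f₀ t) = uGrid j :=
    hFinv _ ⟨uGrid_pos j, uGrid_lt_one j⟩
  have hFb : (∫ t in Set.Iic b, f₀ t) = uGrid (j + 1) :=
    hFinv _ ⟨uGrid_pos (j + 1), uGrid_lt_one (j + 1)⟩
  have hab : a ≤ b := le_trans hx'.1 hx'.2
  -- complementary integrals
  have hG : ∀ p : ℝ, (∫ t in Set.Ioi p, f₀ t) = 1 - ∫ t in Set.Iic p, f₀ t := by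
    intro p
    have h := intervalIntegral.integral_Iic_add_Ioi (μ := volume) (f := f₀) (b := p)
      hf_int.integrableOn hf_int.integrableOn
    rw [hf_mass] at h
    linarith
  have hGa : (∫ t in Set.Ioi a, f₀ t) = 1 - uGrid j := by rw [hG, hFa]
  have hGb : (∫ t in Set.Ioi b, f₀ t) = 1 - uGrid (j + 1) := by rw [hG, hFb]
  -- positivity on the cell
  have hzlt : ∃ z, z < a ∧ 0 < f₀ z := by
    by_contra h
    push_neg at h
    have hz : ∀ z ∈ Set.Iio a, f₀ z = 0 := fun z hz =>
      le_antisymm (h z hz) (hf_nonneg z)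
    have h0 : (∫ t in Set.Iic a, f₀ t) = 0 := by
      rw [← setIntegral_congr_set MeasureTheory.Iio_ae_eq_Iic]
      exact setIntegral_eq_zero_of_forall_eq_zero hz
    have := uGrid_pos j
    rw [hFa] at h0
    linarith
  have hylt : ∃ y, b < y ∧ 0 < f₀ y := by
    by_contra h
    push_neg at h
    have hy : ∀ y ∈ Set.Ioi b, f₀ y = 0 := fun y hy =>
      le_antisymm (h y hy) (hf_nonneg y)
    have h0 : (∫ t in Set.Ioi b, f₀ t) = 0 :=
      setIntegral_eq_zero_of_forall_eq_zero hy
    have := uGrid_lt_one (j + 1)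
    rw [hGb] at h0
    linarith
  obtain ⟨z, hza, hz0⟩ := hzlt
  obtain ⟨y, hby, hy0⟩ := hylt
  have hpos : ∀ w ∈ Set.Icc a b, 0 < f₀ w := by
    intro w hw
    have hzy : z < y := by linarith [hw.1, hw.2]
    have hne : y - z ≠ 0 := by intro h; linarith
    set t : ℝ := (y - w) / (y - z) with ht_def
    have ht0 : 0 ≤ t := div_nonneg (by linarith [hw.2]) (by linarith)
    have ht1 : t ≤ 1 := (div_le_one (by linarith)).2 (by linarith [hw.1])
    have hcombo : t * z + (1 - t) * y = w := by
      rw [ht_def]; field_simp; ring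
    have h := hlogconc z y t ⟨ht0, ht1⟩
    rw [hcombo] at h
    have hprod : 0 < f₀ z ^ t * f₀ y ^ (1 - t) :=
      mul_pos (Real.rpow_pos_of_pos hz0 _) (Real.rpow_pos_of_pos hy0 _)
    linarith
  have hpa : 0 < f₀ a := hpos a ⟨le_refl a, hab⟩
  have hpb : 0 < f₀ b := hpos b ⟨hab, le_refl b⟩
  have hpx' : 0 < f₀ x' := hpos x' hx'
  -- bound f₀ x' ≤ 2 * f₀ a
  have h1 : f₀ x' ≤ 2 * f₀ a := by
    have key := lemA f₀ hf_nonneg hf_int hlogconc hx'.1 hpa hpx'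
    have hmono : (∫ t in Set.Iic x', f₀ t) ≤ ∫ t in Set.Iic b, f₀ t := by
      apply setIntegral_mono_set hf_int.integrableOn
        (Filter.Eventually.of_forall fun t => hf_nonneg t)
      exact Filter.Eventually.of_forall (Set.Iic_subset_Iic.2 hx'.2)
    rw [hFa] at key
    rw [hFb] at hmono
    have hr := uGrid_ratio1 j
    have hu := uGrid_pos j
    nlinarith [mul_le_mul_of_nonneg_left hmono (le_of_lt hpa)]
  -- bound f₀ x' ≤ 2 * f₀ b
  have h2 : f₀ x' ≤ 2 * f₀ b := by
    have key := lemB f₀ hf_nonneg hf_int hlogconc hx'.2 hpb hpx'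
    have hmono : (∫ t in Set.Ioi x', f₀ t) ≤ ∫ t in Set.Ioi a, f₀ t := by
      apply setIntegral_mono_set hf_int.integrableOn
        (Filter.Eventually.of_forall fun t => hf_nonneg t)
      exact Filter.Eventually.of_forall (Set.Ioi_subset_Ioi hx'.1)
    rw [hGb] at key
    rw [hGa] at hmono
    have hr := uGrid_ratio2 j
    have hu : 0 < 1 - uGrid (j + 1) := by linarith [uGrid_lt_one (j + 1)]
    nlinarith [mul_le_mul_of_nonneg_left hmono (le_of_lt hpb)]
  -- lower bound on f₀ x''
  have h3 : min (f₀ a) (f₀ b) ≤ f₀ x'' := by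
    rcases eq_or_lt_of_le hab with heq | hab'
    · have hx2 : x'' ≤ a := by rw [heq]; exact hx''.2
      have hxa : x'' = a := le_antisymm hx2 hx''.1
      rw [hxa]
      exact min_le_left _ _
    · set t : ℝ := (b - x'') / (b - a) with ht_def
      have hba : (0:ℝ) < b - a := by linarith
      have ht0 : 0 ≤ t := div_nonneg (by linarith [hx''.2]) (le_of_lt hba)
      have ht1 : t ≤ 1 := (div_le_one hba).2 (by linarith [hx''.1])
      have hcombo : t * a + (1 - t) * b = x'' := by
        rw [ht_def]; field_simp; ring
      have h := hlogconc a b t ⟨ht0, ht1⟩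
      rw [hcombo] at h
      have hm : 0 < min (f₀ a) (f₀ b) := lt_min hpa hpb
      have hmin_eq : min (f₀ a) (f₀ b) ^ t * min (f₀ a) (f₀ b) ^ (1 - t)
          = min (f₀ a) (f₀ b) := by
        rw [← Real.rpow_add hm]
        norm_num
      have hb1 : min (f₀ a) (f₀ b) ^ t ≤ f₀ a ^ t :=
        Real.rpow_le_rpow (le_of_lt hm) (min_le_left _ _) ht0
      have hb2 : min (f₀ a) (f₀ b) ^ (1 - t) ≤ f₀ b ^ (1 - t) :=
        Real.rpow_le_rpow (le_of_lt hm) (min_le_right _ _) (by linarith)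
      calc min (f₀ a) (f₀ b) = min (f₀ a) (f₀ b) ^ t * min (f₀ a) (f₀ b) ^ (1 - t) :=
            hmin_eq.symm
      _ ≤ f₀ a ^ t * f₀ b ^ (1 - t) :=
            mul_le_mul hb1 hb2 (Real.rpow_nonneg (le_of_lt hm) _)
              (Real.rpow_nonneg (hf_nonneg a) _)
      _ ≤ f₀ x'' := h
  rcases le_total (f₀ a) (f₀ b) with hc | hc
  · rw [min_eq_left hc] at h3
    linarith
  · rw [min_eq_right hc] at h3
    linarith
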